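/- arXiv:1502.06926 — 3 statements merged into one kernel-verified Lean document; each statement's English description precedes it below -/
import Mathlib

section
/- Let A ⊆ Φ⁺ be separable, i.e., cone(A) ∩ cone(Φ⁺ \ A) = {0}. Then A is biconvex: both A and Φ⁺ \ A are convex. -/
open Pointwise

noncomputable section

/-- The set of nonnegative linear combinations of elements of `X`. -/
def coneOf {V : Type*} [AddCommGroup V] [Module ℝ V] (X : Set V) : Set V :=
  {v | ∃ (n : ℕ) (c : Fin n → ℝ) (f : Fin n → V),
    (∀ i, 0 ≤ c i) ∧ (∀ i, f i ∈ X) ∧ ∑ i, c i • f i = v}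

/-- A geometric representation of the Coxeter system `cs` on the real quadratic
space `(V, bil)`: each simple generator acts as the `bil`-reflection in its simple
root, and the simple roots form a simple system. -/
structure GeomRep {B : Type*} [Fintype B] {W : Type*} [Group W]
    (M : CoxeterMatrix B) (cs : CoxeterSystem M W)
    (V : Type*) [AddCommGroup V] [Module ℝ V] where
  /-- the symmetric bilinear form -/
  bil : LinearMap.BilinForm ℝ V
  bil_symm : ∀ u v : V, bil u v = bil v u
  /-- the representation of `W` by linear automorphisms of `V` -/
  π : W →* (V ≃ₗ[ℝ] V)
  /-- the simple roots -/
  α : B → V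
  norm_one : ∀ i, bil (α i) (α i) = 1
  simple_refl : ∀ i v, π (cs.simple i) v = v - (2 * bil (α i) v) • α i
  pos_indep : ∀ c : B → ℝ, (∀ i, 0 ≤ c i) → ∑ i, c i • α i = 0 → ∀ i, c i = 0
  angle_finite : ∀ i j, i ≠ j → M.M i j ≠ 0 →
    bil (α i) (α j) = - Real.cos (Real.pi / (M.M i j : ℝ))
  angle_infinite : ∀ i j, i ≠ j → M.M i j = 0 → bil (α i) (α j) ≤ -1

namespace GeomRep

variable {B : Type*} [Fintype B] {W : Type*} [Group W]
  {M : CoxeterMatrix B} {cs : CoxeterSystem M W}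
  {V : Type*} [AddCommGroup V] [Module ℝ V]

/-- The root system `Φ = W(Δ)`. -/
def Phi (G : GeomRep M cs V) : Set V := {v | ∃ (w : W) (i : B), G.π w (G.α i) = v}

/-- The positive roots `Φ⁺ = cone(Δ) ∩ Φ`. -/
def PhiPos (G : GeomRep M cs V) : Set V := G.Phi ∩ coneOf (Set.range G.α)

/-- The (left) inversion set `N(w) = Φ⁺ ∩ w(Φ⁻)`. -/
def N (G : GeomRep M cs V) (w : W) : Set V := G.PhiPos ∩ (G.π w '' (-G.PhiPos))

/-- `A ⊆ Φ⁺` is closed if for all `α, β ∈ A`, every root in `cone(α,β)` lies in `A`. -/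
def IsClosedSet (G : GeomRep M cs V) (A : Set V) : Prop :=
  ∀ a ∈ A, ∀ b ∈ A, coneOf {a, b} ∩ G.Phi ⊆ A

/-- `A` is biclosed if `A` and `Φ⁺ \ A` are both closed. -/
def IsBiclosed (G : GeomRep M cs V) (A : Set V) : Prop :=
  G.IsClosedSet A ∧ G.IsClosedSet (G.PhiPos \ A)

/-- `A` is convex if `A = cone(A) ∩ Φ`. -/
def IsConvexSet (G : GeomRep M cs V) (A : Set V) : Prop :=
  A = coneOf A ∩ G.Phi

/-- `A` is biconvex if `A` and `Φ⁺ \ A` are both convex. -/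
def IsBiconvex (G : GeomRep M cs V) (A : Set V) : Prop :=
  G.IsConvexSet A ∧ G.IsConvexSet (G.PhiPos \ A)

/-- `A ⊆ Φ⁺` is separable if `cone(A) ∩ cone(Φ⁺ \ A) = {0}`. -/
def IsSeparable (G : GeomRep M cs V) (A : Set V) : Prop :=
  coneOf A ∩ coneOf (G.PhiPos \ A) = {0}

end GeomRep

/-- The right weak order on a Coxeter group. -/
def WeakLE {B : Type*} {W : Type*} [Group W] {M : CoxeterMatrix B}
    (cs : CoxeterSystem M W) (u w : W) : Prop :=
  cs.length u + cs.length (u⁻¹ * w) = cs.length w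

section ConeLemmas

variable {V : Type*} [AddCommGroup V] [Module ℝ V]

lemma coneOf_zero_mem (X : Set V) : (0 : V) ∈ coneOf X :=
  ⟨0, ![], ![], by simp, by simp, by simp⟩

lemma mem_coneOf_self {X : Set V} {a : V} (ha : a ∈ X) : a ∈ coneOf X :=
  ⟨1, fun _ => 1, fun _ => a, fun _ => zero_le_one, fun _ => ha, by simp⟩

lemma coneOf_add_mem {X : Set V} {v w : V} (hv : v ∈ coneOf X) (hw : w ∈ coneOf X) :
    v + w ∈ coneOf X := by
  obtain ⟨n, c, f, hc, hf, hs⟩ := hv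
  obtain ⟨m, d, g, hd, hg, ht⟩ := hw
  refine ⟨n + m, Fin.append c d, Fin.append f g, ?_, ?_, ?_⟩
  · intro i
    refine Fin.addCases (fun j => ?_) (fun j => ?_) i
    · simpa [Fin.append_left] using hc j
    · simpa [Fin.append_right] using hd j
  · intro i
    refine Fin.addCases (fun j => ?_) (fun j => ?_) i
    · simpa [Fin.append_left] using hf j
    · simpa [Fin.append_right] using hg j
  · rw [Fin.sum_univ_add]
    simp [Fin.append_left, Fin.append_right, hs, ht]

lemma coneOf_smul_mem {X : Set V} {t : ℝ} (ht : 0 ≤ t) {v : V} (hv : v ∈ coneOf X) :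
    t • v ∈ coneOf X := by
  obtain ⟨n, c, f, hc, hf, hs⟩ := hv
  refine ⟨n, fun i => t * c i, f, fun i => mul_nonneg ht (hc i), hf, ?_⟩
  simp [mul_smul, ← Finset.smul_sum, hs]

lemma coneOf_subset_coneOf {X Y : Set V} (h : X ⊆ coneOf Y) : coneOf X ⊆ coneOf Y := by
  rintro v ⟨n, c, f, hc, hf, rfl⟩
  refine Finset.sum_induction _ (· ∈ coneOf Y) (fun a b ha hb => coneOf_add_mem ha hb)
    (coneOf_zero_mem Y) (fun i _ => ?_)
  exact coneOf_smul_mem (hc i) (h (hf i))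

end ConeLemmas

lemma GeomRep.ne_zero_of_mem_Phi {B : Type*} [Fintype B] {W : Type*} [Group W]
    {M : CoxeterMatrix B} {cs : CoxeterSystem M W}
    {V : Type*} [AddCommGroup V] [Module ℝ V] (G : GeomRep M cs V)
    {v : V} (hv : v ∈ G.Phi) : v ≠ 0 := by
  obtain ⟨w, i, rfl⟩ := hv
  intro h
  have h0 : G.α i = 0 := by
    have := congrArg (G.π w).symm h
    simpa using this
  have := G.norm_one i
  rw [h0] at this
  simp at this

/-- A separable subset of `Φ⁺` is biconvex. -/
theorem stmt6 {B : Type*} [Fintype B] {W : Type*} [Group W]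
    {M : CoxeterMatrix B} {cs : CoxeterSystem M W}
    {V : Type*} [AddCommGroup V] [Module ℝ V] (G : GeomRep M cs V)
    (A : Set V) (hA : A ⊆ G.PhiPos) (hsep : G.IsSeparable A) : G.IsBiconvex A := by
  have hpos : G.PhiPos ⊆ coneOf (Set.range G.α) := fun v hv => hv.2
  have hconeA : coneOf A ⊆ coneOf (Set.range G.α) :=
    coneOf_subset_coneOf (fun a ha => hpos (hA ha))
  have hconeC : coneOf (G.PhiPos \ A) ⊆ coneOf (Set.range G.α) :=
    coneOf_subset_coneOf (fun a ha => hpos ha.1)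
  constructor
  · apply Set.Subset.antisymm
    · intro a ha
      exact ⟨mem_coneOf_self ha, (hA ha).1⟩
    · rintro v ⟨hvc, hvΦ⟩
      have hvpos : v ∈ G.PhiPos := ⟨hvΦ, hconeA hvc⟩
      by_contra hvA
      have : v ∈ coneOf A ∩ coneOf (G.PhiPos \ A) :=
        ⟨hvc, mem_coneOf_self ⟨hvpos, hvA⟩⟩
      rw [hsep] at this
      exact G.ne_zero_of_mem_Phi hvΦ this
  · apply Set.Subset.antisymm
    · intro a ha
      exact ⟨mem_coneOf_self ha, ha.1.1⟩
    · rintro v ⟨hvc, hvΦ⟩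
      have hvpos : v ∈ G.PhiPos := ⟨hvΦ, hconeC hvc⟩
      refine ⟨hvpos, fun hvA => ?_⟩
      have : v ∈ coneOf A ∩ coneOf (G.PhiPos \ A) := ⟨mem_coneOf_self hvA, hvc⟩
      rw [hsep] at this
      exact G.ne_zero_of_mem_Phi hvΦ this
end
end

section
/- For every w ∈ W there exists a linear hyperplane H in V such that N(w) lies strictly on one side of H and Φ⁺ \ N(w) lies strictly on the other side. -/
open Pointwise

noncomputable section

section Aux

open CoxeterSystem

namespace GeomRep

variable {B : Type*} [Fintype B] {W : Type*} [Group W]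
  {M : CoxeterMatrix B} {cs : CoxeterSystem M W}
  {V : Type*} [AddCommGroup V] [Module ℝ V] (G : GeomRep M cs V)

lemma mem_coneOf {X : Set V} {x : V} (hx : x ∈ X) : x ∈ coneOf X :=
  ⟨1, fun _ => 1, fun _ => x, fun _ => zero_le_one, fun _ => hx, by simp⟩

lemma coneOf_add_smul {X : Set V} {a b : ℝ} {x y : V} (ha : 0 ≤ a) (hb : 0 ≤ b)
    (hx : x ∈ coneOf X) (hy : y ∈ coneOf X) : a • x + b • y ∈ coneOf X := by
  obtain ⟨n₁, c₁, f₁, hc₁, hf₁, hs₁⟩ := hx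
  obtain ⟨n₂, c₂, f₂, hc₂, hf₂, hs₂⟩ := hy
  refine ⟨n₁ + n₂, Fin.addCases (fun l => a * c₁ l) (fun l => b * c₂ l),
    Fin.addCases f₁ f₂, ?_, ?_, ?_⟩
  · intro l
    refine Fin.addCases (fun l => ?_) (fun l => ?_) l <;> simp <;>
      [exact mul_nonneg ha (hc₁ l); exact mul_nonneg hb (hc₂ l)]
  · intro l
    refine Fin.addCases (fun l => ?_) (fun l => ?_) l <;> simp [hf₁, hf₂]
  · rw [Fin.sum_univ_add]
    simp only [Fin.addCases_left, Fin.addCases_right]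
    rw [← hs₁, ← hs₂, Finset.smul_sum, Finset.smul_sum]
    congr 1 <;> exact Finset.sum_congr rfl fun l _ => by rw [mul_smul]

lemma mulApply (e₁ e₂ : V ≃ₗ[ℝ] V) (x : V) : (e₁ * e₂) x = e₁ (e₂ x) := rfl

lemma bil_pi_invariant (w : W) (u v : V) : G.bil (G.π w u) (G.π w v) = G.bil u v := by
  obtain ⟨ω, rfl⟩ := cs.wordProd_surjective w
  induction ω generalizing u v with
  | nil => simp [CoxeterSystem.wordProd_nil]
  | cons i ω ih =>
      rw [cs.wordProd_cons, map_mul]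
      have : ∀ u v : V, G.bil (G.π (cs.simple i) u) (G.π (cs.simple i) v) = G.bil u v := by
        intro u v
        rw [G.simple_refl, G.simple_refl]
        simp only [map_sub, map_smul, LinearMap.sub_apply, LinearMap.smul_apply,
          smul_eq_mul]
        rw [G.bil_symm u (G.α i), G.norm_one]
        ring
      rw [mulApply, mulApply, this, ih]

lemma root_norm_one {v : V} (hv : v ∈ G.Phi) : G.bil v v = 1 := by
  obtain ⟨w, i, rfl⟩ := hv
  rw [G.bil_pi_invariant, G.norm_one]

lemma root_ne_zero {v : V} (hv : v ∈ G.Phi) : v ≠ 0 := by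
  intro h
  have := G.root_norm_one hv
  rw [h] at this
  simp at this

omit [Fintype B] in
lemma simple_eq_of_M_eq_one' {i j : B} (h : M.M i j = 1) : cs.simple i = cs.simple j := by
  have h2 := cs.simple_mul_simple_pow i j
  rw [h, pow_one] at h2
  rw [← cs.inv_simple j]
  exact eq_inv_of_mul_eq_one_left h2

lemma bil_nonpos_of_simple_ne {i j : B} (h : cs.simple i ≠ cs.simple j) :
    G.bil (G.α i) (G.α j) ≤ 0 := by
  have hij : i ≠ j := fun hh => h (by rw [hh])
  rcases eq_or_ne (M.M i j) 0 with h0 | h0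
  · linarith [G.angle_infinite i j hij h0]
  · have h1 : M.M i j ≠ 1 := fun hh => h (simple_eq_of_M_eq_one' (cs := cs) hh)
    have h2 : 2 ≤ M.M i j := by omega
    rw [G.angle_finite i j hij h0]
    have hm : (2:ℝ) ≤ (M.M i j : ℝ) := by exact_mod_cast h2
    have hc : 0 ≤ Real.cos (Real.pi / (M.M i j : ℝ)) := by
      apply Real.cos_nonneg_of_mem_Icc
      constructor
      · rw [le_div_iff₀ (by linarith)]
        nlinarith [Real.pi_pos]
      · rw [div_le_div_iff₀ (by linarith) (by norm_num)]
        nlinarith [Real.pi_pos]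
    linarith

end GeomRep

end Aux
/-- Chebyshev-like sequence controlling rank-2 alternating root coefficients. -/
def dseq (x : ℝ) : ℕ → ℝ
  | 0 => 0
  | 1 => 1
  | (n+2) => (-2*x) * dseq x (n+1) - dseq x n

@[simp] lemma dseq_zero (x : ℝ) : dseq x 0 = 0 := rfl
@[simp] lemma dseq_one (x : ℝ) : dseq x 1 = 1 := rfl
lemma dseq_two_add (x : ℝ) (n : ℕ) :
    dseq x (n+2) = (-2*x) * dseq x (n+1) - dseq x n := rfl

lemma dseq_nonneg_of_le_neg_one {x : ℝ} (hx : x ≤ -1) :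
    ∀ k, 0 ≤ dseq x k ∧ dseq x k ≤ dseq x (k+1) := by
  intro k
  induction k with
  | zero => simp
  | succ k ih =>
      obtain ⟨h0, h1⟩ := ih
      refine ⟨by linarith, ?_⟩
      rw [dseq_two_add]
      nlinarith

lemma dseq_mul_sin {m : ℕ} (hm : 2 ≤ m) :
    ∀ k, dseq (-Real.cos (Real.pi / m)) k * Real.sin (Real.pi / m)
      = Real.sin (k * (Real.pi / m)) := by
  set θ := Real.pi / (m:ℝ) with hθ
  have key : ∀ k : ℕ, (dseq (-Real.cos θ) k * Real.sin θ = Real.sin (k * θ)) ∧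
      (dseq (-Real.cos θ) (k+1) * Real.sin θ = Real.sin (((k:ℝ)+1) * θ)) := by
    intro k
    induction k with
    | zero => simp
    | succ k ih =>
        obtain ⟨h0, h1⟩ := ih
        constructor
        · push_cast
          exact h1
        · rw [dseq_two_add]
          have e1 : Real.sin (((k:ℝ)+1) * θ + θ)
              = Real.sin (((k:ℝ)+1)*θ) * Real.cos θ + Real.cos (((k:ℝ)+1)*θ) * Real.sin θ :=
            Real.sin_add _ _
          have e2 : Real.sin (((k:ℝ)+1) * θ - θ)
              = Real.sin (((k:ℝ)+1)*θ) * Real.cos θ - Real.cos (((k:ℝ)+1)*θ) * Real.sin θ :=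
            Real.sin_sub _ _
          have e3 : ((k:ℝ)+1) * θ - θ = (k:ℝ) * θ := by ring
          have e4 : (((k:ℝ)+1)+1) * θ = ((k:ℝ)+1) * θ + θ := by ring
          push_cast
          rw [e4, e1]
          rw [e3] at e2
          rw [e2] at h0
          linear_combination (2 * Real.cos θ) * h1 - h0
  exact fun k => (key k).1

lemma dseq_cos_nonneg {m : ℕ} (hm : 2 ≤ m) {k : ℕ} (hk : k ≤ m) :
    0 ≤ dseq (-Real.cos (Real.pi / m)) k := by
  have hm' : (2:ℝ) ≤ (m:ℝ) := by exact_mod_cast hm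
  have hmpos : (0:ℝ) < (m:ℝ) := by linarith
  have hs : 0 < Real.sin (Real.pi / m) := by
    apply Real.sin_pos_of_pos_of_lt_pi
    · positivity
    · rw [div_lt_iff₀ hmpos]
      nlinarith [Real.pi_pos]
  have h2 : 0 ≤ Real.sin (k * (Real.pi / m)) := by
    apply Real.sin_nonneg_of_nonneg_of_le_pi
    · positivity
    · have hk' : (k:ℝ) ≤ (m:ℝ) := by exact_mod_cast hk
      calc (k:ℝ) * (Real.pi / m) ≤ (m:ℝ) * (Real.pi / m) := by
              apply mul_le_mul_of_nonneg_right hk'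
              positivity
        _ = Real.pi := by field_simp
  have := dseq_mul_sin hm k
  nlinarith

section Gamma

open CoxeterSystem

namespace GeomRep

variable {B : Type*} [Fintype B] {W : Type*} [Group W]
  {M : CoxeterMatrix B} {cs : CoxeterSystem M W}
  {V : Type*} [AddCommGroup V] [Module ℝ V] (G : GeomRep M cs V)

lemma gamma_formula (i j : B) (k : ℕ) :
    G.π (cs.wordProd (alternatingWord i j k)) (G.α i)
      = dseq (G.bil (G.α i) (G.α j)) (if Even k then k+1 else k) • G.α i
        + dseq (G.bil (G.α i) (G.α j)) (if Even k then k else k+1) • G.α j := by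
  set x := G.bil (G.α i) (G.α j) with hx
  induction k with
  | zero =>
      rw [show alternatingWord i j 0 = [] from rfl, CoxeterSystem.wordProd_nil, map_one]
      simp
  | succ k ih =>
      rw [alternatingWord_succ', wordProd_cons, map_mul, mulApply, ih]
      by_cases hk : Even k
      · have hk1 : ¬ Even (k+1) := fun h => (Nat.even_add_one.mp h) hk
        rw [if_pos hk, if_pos hk, if_pos hk, if_neg hk1, if_neg hk1]
        rw [map_add, map_smul, map_smul, G.simple_refl, G.simple_refl]
        rw [G.bil_symm (G.α j) (G.α i), ← hx, G.norm_one]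
        rw [dseq_two_add]
        module
      · have hk1 : Even (k+1) := Nat.even_add_one.mpr hk
        rw [if_neg hk, if_neg hk, if_neg hk, if_pos hk1, if_pos hk1]
        rw [map_add, map_smul, map_smul, G.simple_refl, G.simple_refl]
        rw [G.norm_one, ← hx]
        rw [dseq_two_add]
        module

end GeomRep

end Gamma
section Key

open CoxeterSystem

namespace GeomRep

variable {B : Type*} [Fintype B] {W : Type*} [Group W]
  {M : CoxeterMatrix B} {cs : CoxeterSystem M W}
  {V : Type*} [AddCommGroup V] [Module ℝ V] (G : GeomRep M cs V)

lemma key : ∀ (n : ℕ) (w : W) (i : B), cs.length w ≤ n →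
    cs.length w < cs.length (w * cs.simple i) →
    G.π w (G.α i) ∈ coneOf (Set.range G.α) := by
  intro n
  induction n with
  | zero =>
      intro w i hw _
      have hw1 : w = 1 := cs.length_eq_zero_iff.mp (Nat.le_zero.mp hw)
      subst hw1
      rw [map_one]
      exact mem_coneOf (Set.mem_range_self i)
  | succ n IH =>
      intro w i hw hi
      rcases Nat.lt_or_ge (cs.length w) (n+1) with hlt | hge
      · exact IH w i (Nat.lt_succ_iff.mp hlt) hi
      have hw1 : cs.length w = n + 1 := le_antisymm hw hge
      have hwne : w ≠ 1 := by
        intro h; rw [h, cs.length_one] at hw1; omega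
      obtain ⟨j, hj⟩ := cs.exists_rightDescent_of_ne_one hwne
      rw [CoxeterSystem.IsRightDescent] at hj
      have hsij : cs.simple i ≠ cs.simple j := by
        intro h; rw [h] at hi; omega
      have hij : i ≠ j := fun h => hsij (by rw [h])
      have hM1 : M.M i j ≠ 1 := fun h => hsij (simple_eq_of_M_eq_one' (cs := cs) h)
      set x := G.bil (G.α i) (G.α j) with hxdef
      have hdnn : ∀ k : ℕ, (M.M i j ≠ 0 → k ≤ M.M i j) → 0 ≤ dseq x k := by
        intro k hk
        rcases eq_or_ne (M.M i j) 0 with h0 | h0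
        · exact (dseq_nonneg_of_le_neg_one (by rw [hxdef]; exact G.angle_infinite i j hij h0) k).1
        · have h2 : 2 ≤ M.M i j := by omega
          rw [hxdef, G.angle_finite i j hij h0]
          exact dseq_cos_nonneg h2 (hk h0)
      have inner : ∀ (l : ℕ) (v : W) (k : ℕ), cs.length v = l → 1 ≤ k →
          w = v * cs.wordProd (alternatingWord i j k) →
          cs.length v + k = cs.length w →
          (M.M i j ≠ 0 → k < M.M i j) →
          cs.length v < cs.length (v * cs.simple (if Even k then i else j)) →
          G.π w (G.α i) ∈ coneOf (Set.range G.α) := by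
        intro l
        induction l using Nat.strong_induction_on with
        | _ l innerIH =>
        intro v k hvl hk1 hw_eq hlen hbound hH
        set t : B := if Even k then j else i with ht
        rcases cs.length_mul_simple v t with hasc | hdesc
        · -- terminal case : both i and j are ascents of v
          have hvi : cs.length v < cs.length (v * cs.simple i) := by
            rcases Nat.even_or_odd k with he | ho
            · rw [if_pos he] at hH; exact hH
            · have htt : t = i := by rw [ht, if_neg (Nat.not_even_iff_odd.mpr ho)]
              rw [htt] at hasc; omega
          have hvj : cs.length v < cs.length (v * cs.simple j) := by
            rcases Nat.even_or_odd k with he | ho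
            · have htt : t = j := by rw [ht, if_pos he]
              rw [htt] at hasc; omega
            · rw [if_neg (Nat.not_even_iff_odd.mpr ho)] at hH; exact hH
          have hvn : cs.length v ≤ n := by omega
          have pvi := IH v i hvn hvi
          have pvj := IH v j hvn hvj
          have ha : 0 ≤ dseq x (if Even k then k+1 else k) := by
            apply hdnn; intro h0; have := hbound h0
            split <;> omega
          have hb : 0 ≤ dseq x (if Even k then k else k+1) := by
            apply hdnn; intro h0; have := hbound h0
            split <;> omega
          have : G.π w (G.α i) = dseq x (if Even k then k+1 else k) • G.π v (G.α i)
              + dseq x (if Even k then k else k+1) • G.π v (G.α j) := by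
            rw [hw_eq, map_mul, mulApply, G.gamma_formula i j k, ← hxdef, map_add,
              map_smul, map_smul]
          rw [this]
          exact coneOf_add_smul ha hb pvi pvj
        · -- descent case : recurse with v * s t and k + 1
          have hl1 : 1 ≤ cs.length v := by omega
          set v' : W := v * cs.simple t with hv'
          have hlv' : cs.length v' = cs.length v - 1 := by omega
          have hw_eq' : w = v' * cs.wordProd (alternatingWord i j (k+1)) := by
            rw [alternatingWord_succ', wordProd_cons, hv']
            rw [show (if Even k then j else i) = t from rfl]
            rw [mul_assoc, ← mul_assoc (cs.simple t), cs.simple_mul_simple_self, one_mul, hw_eq]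
          have hbound' : M.M i j ≠ 0 → k + 1 < M.M i j := by
            intro h0
            have hk1M := hbound h0
            by_contra hcon
            have hkm : k + 1 = M.M i j := by omega
            -- braid relation contradiction
            have hbraid : cs.wordProd (alternatingWord i j (M.M i j))
                = cs.wordProd (alternatingWord j i (M.M i j)) := by
              have := cs.prod_alternatingWord_eq_prod_alternatingWord_sub i j (M.M i j)
                (by omega)
              rwa [show M.M i j * 2 - M.M i j = M.M i j by omega] at this
            have halt : alternatingWord j i (M.M i j)
                = (alternatingWord i j (M.M i j - 1)).concat i := by
              rw [← alternatingWord_succ j i (M.M i j - 1)]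
              congr 1
              omega
            have hwsi : w * cs.simple i = v' * cs.wordProd (alternatingWord i j (M.M i j - 1)) := by
              rw [hw_eq', hkm, hbraid, halt, wordProd_concat]
              simp only [mul_assoc]
              rw [cs.simple_mul_simple_self, mul_one]
            have hle : cs.length (w * cs.simple i) ≤ cs.length v' + (M.M i j - 1) := by
              rw [hwsi]
              calc cs.length (v' * cs.wordProd (alternatingWord i j (M.M i j - 1)))
                  ≤ cs.length v' + cs.length (cs.wordProd (alternatingWord i j (M.M i j - 1))) :=
                    cs.length_mul_le _ _
                _ ≤ cs.length v' + (M.M i j - 1) := by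
                    have := cs.length_wordProd_le (alternatingWord i j (M.M i j - 1))
                    rw [length_alternatingWord] at this
                    omega
            omega
          have hH' : cs.length v' < cs.length (v' * cs.simple (if Even (k+1) then i else j)) := by
            have hteq : (if Even (k+1) then i else j) = t := by
              rw [ht]
              rcases Nat.even_or_odd k with he | ho
              · rw [if_pos he, if_neg (by simp [Nat.even_add_one, he])]
              · rw [if_neg (Nat.not_even_iff_odd.mpr ho),
                  if_pos (Nat.even_add_one.mpr (Nat.not_even_iff_odd.mpr ho))]
            have h2 : v' * cs.simple t = v := by
              rw [hv', mul_assoc, cs.simple_mul_simple_self, mul_one]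
            rw [hteq, h2]
            omega
          exact innerIH (cs.length v - 1) (by omega) v' (k+1) hlv' (by omega) hw_eq'
            (by omega) hbound' hH'
      -- initialize the chain with v = w * s j, k = 1
      have hlw : cs.length (w * cs.simple j) + 1 = cs.length w := by
        rcases cs.length_mul_simple w j with h | h
        · omega
        · exact h
      apply inner (cs.length (w * cs.simple j)) (w * cs.simple j) 1 rfl le_rfl
      · rw [show alternatingWord i j 1 = [j] from rfl, wordProd_cons, wordProd_nil, mul_one]
        rw [mul_assoc, cs.simple_mul_simple_self, mul_one]
      · omega
      · intro h0; omega
      · rw [if_neg (by decide)]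
        rw [mul_assoc, cs.simple_mul_simple_self, mul_one]
        omega

end GeomRep

end Key
section Functional

namespace GeomRep

variable {B : Type*} [Fintype B] {W : Type*} [Group W]
  {M : CoxeterMatrix B} {cs : CoxeterSystem M W}
  {V : Type*} [AddCommGroup V] [Module ℝ V] (G : GeomRep M cs V)

lemma exists_pos_functional : ∃ f : V →ₗ[ℝ] ℝ, ∀ i : B, 0 < f (G.α i) := by
  classical
  set S : Submodule ℝ V := Submodule.span ℝ (Set.range G.α) with hS
  have hfin : FiniteDimensional ℝ S :=
    FiniteDimensional.span_of_finite ℝ (Set.finite_range G.α)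
  set n := Module.finrank ℝ S with hn
  let b : Module.Basis (Fin n) ℝ S := Module.finBasis ℝ S
  let e : S ≃ₗ[ℝ] (Fin n → ℝ) := b.equivFun
  let a : B → S := fun i => ⟨G.α i, Submodule.subset_span (Set.mem_range_self i)⟩
  let L : (B → ℝ) →ₗ[ℝ] (Fin n → ℝ) :=
    { toFun := fun c => ∑ i, c i • e (a i)
      map_add' := by
        intro c d
        simp [add_smul, Finset.sum_add_distrib]
      map_smul' := by
        intro r c
        simp [Finset.smul_sum, smul_smul] }
  have hL : ∀ c : B → ℝ, L c = ∑ i, c i • e (a i) := fun _ => rfl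
  have hLcont : Continuous L := L.continuous_of_finiteDimensional
  set K : Set (Fin n → ℝ) := L '' stdSimplex ℝ B with hK
  have hKconv : Convex ℝ K := (convex_stdSimplex ℝ B).linear_image L
  have hKcomp : IsCompact K := (isCompact_stdSimplex ℝ B).image hLcont
  have h0K : (0 : Fin n → ℝ) ∉ K := by
    rintro ⟨c, hc, hc0⟩
    have h1 : e (∑ i, c i • a i) = 0 := by
      rw [map_sum]
      simpa [map_smul, hL] using hc0
    have h2 : (∑ i, c i • a i) = 0 := by
      apply e.injective
      simpa using h1
    have h3 : (∑ i, c i • G.α i) = 0 := by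
      have := congrArg (Subtype.val) h2
      simpa using this
    have h4 := G.pos_indep c hc.1 h3
    have h5 := hc.2
    rw [Finset.sum_congr rfl (fun i _ => h4 i)] at h5
    simp at h5
  obtain ⟨f, u, hfu, hKf⟩ := geometric_hahn_banach_point_closed hKconv hKcomp.isClosed h0K
  have hu : 0 < u := by simpa using hfu
  obtain ⟨q, hq⟩ := Submodule.exists_isCompl S
  refine ⟨(f.toLinearMap.comp e.toLinearMap).comp (S.linearProjOfIsCompl q hq), ?_⟩
  intro i
  have hai : S.linearProjOfIsCompl q hq (G.α i) = a i :=
    Submodule.linearProjOfIsCompl_apply_left hq (a i)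
  have hmem : e (a i) ∈ K := by
    refine ⟨Pi.single i 1, ⟨fun j => ?_, ?_⟩, ?_⟩
    · rcases eq_or_ne j i with rfl | hji
      · simp
      · simp [Pi.single_apply, hji]
    · simp [Pi.single_apply]
    · rw [hL]
      rw [Finset.sum_eq_single i]
      · simp
      · intro j _ hji
        simp [Pi.single_apply, hji]
      · simp
  have := hKf _ hmem
  simp only [LinearMap.comp_apply, hai]
  calc (0:ℝ) < u := hu
    _ < f (e (a i)) := this

lemma pos_on_phiPos {f : V →ₗ[ℝ] ℝ} (hf : ∀ i : B, 0 < f (G.α i)) {v : V}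
    (hv : v ∈ G.PhiPos) : 0 < f v := by
  obtain ⟨hΦ, m, c, g, hc, hg, hsum⟩ := hv
  have hpos : ∀ l, 0 < f (g l) := by
    intro l
    obtain ⟨i, hi⟩ := hg l
    rw [← hi]
    exact hf i
  have hfv : f v = ∑ l, c l * f (g l) := by
    rw [← hsum, map_sum]
    simp [smul_eq_mul]
  have hnn : ∀ l ∈ Finset.univ, 0 ≤ c l * f (g l) :=
    fun l _ => mul_nonneg (hc l) (hpos l).le
  have h0 : 0 ≤ f v := hfv ▸ Finset.sum_nonneg hnn
  rcases h0.lt_or_eq with h | h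
  · exact h
  · exfalso
    have hz : ∀ l ∈ Finset.univ, c l * f (g l) = 0 :=
      (Finset.sum_eq_zero_iff_of_nonneg hnn).mp (by rw [← hfv, ← h])
    have hc0 : ∀ l, c l = 0 := by
      intro l
      rcases mul_eq_zero.mp (hz l (Finset.mem_univ l)) with h' | h'
      · exact h'
      · exact absurd h' (hpos l).ne'
    have : v = 0 := by
      rw [← hsum, Finset.sum_congr rfl (fun l _ => by rw [hc0 l, zero_smul])]
      simp
    exact G.root_ne_zero hΦ this

lemma mem_phiPos_or_neg {v : V} (hv : v ∈ G.Phi) : v ∈ G.PhiPos ∨ -v ∈ G.PhiPos := by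
  obtain ⟨u, i, rfl⟩ := hv
  rcases cs.length_mul_simple u i with h | h
  · left
    exact ⟨⟨u, i, rfl⟩, G.key (cs.length u) u i le_rfl (by omega)⟩
  · right
    have hneg : -(G.π u (G.α i)) = G.π (u * cs.simple i) (G.α i) := by
      rw [map_mul, mulApply, G.simple_refl, G.norm_one]
      rw [show G.α i - (2 * 1 : ℝ) • G.α i = -(G.α i) by module, map_neg]
    rw [hneg]
    have hlen : cs.length (u * cs.simple i) < cs.length (u * cs.simple i * cs.simple i) := by
      rw [mul_assoc, cs.simple_mul_simple_self, mul_one]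
      omega
    exact ⟨⟨u * cs.simple i, i, rfl⟩,
      G.key (cs.length (u * cs.simple i)) (u * cs.simple i) i le_rfl hlen⟩

lemma pi_inv_pi (w : W) (v : V) : G.π w⁻¹ (G.π w v) = v := by
  rw [← mulApply, ← map_mul, inv_mul_cancel, map_one]
  rfl

lemma pi_pi_inv (w : W) (v : V) : G.π w (G.π w⁻¹ v) = v := by
  rw [← mulApply, ← map_mul, mul_inv_cancel, map_one]
  rfl

end GeomRep

end Functional
/-- For every `w ∈ W` there is a linear hyperplane `H = ker ρ` with
`N(w)` strictly on one side and `Φ⁺ \ N(w)` strictly on the other side. -/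
theorem stmt9 {B : Type*} [Fintype B] {W : Type*} [Group W]
    {M : CoxeterMatrix B} {cs : CoxeterSystem M W}
    {V : Type*} [AddCommGroup V] [Module ℝ V] (G : GeomRep M cs V)
    (w : W) : ∃ ρ : V →ₗ[ℝ] ℝ,
      (∀ β ∈ G.N w, 0 < ρ β) ∧ (∀ β ∈ G.PhiPos \ G.N w, ρ β < 0) := by
  obtain ⟨f, hf⟩ := G.exists_pos_functional
  refine ⟨-(f.comp ((G.π w⁻¹ : V ≃ₗ[ℝ] V) : V →ₗ[ℝ] V)), ?_, ?_⟩
  · rintro β ⟨hβpos, v, hv, rfl⟩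
    rw [Set.mem_neg] at hv
    have h1 : G.π w⁻¹ (G.π w v) = v := G.pi_inv_pi w v
    have h2 : 0 < f (-v) := G.pos_on_phiPos hf hv
    simp only [LinearMap.neg_apply, LinearMap.comp_apply, LinearEquiv.coe_coe, h1]
    rw [map_neg] at h2
    linarith
  · rintro β ⟨hβpos, hβN⟩
    have hγΦ : G.π w⁻¹ β ∈ G.Phi := by
      obtain ⟨u, i, rfl⟩ := hβpos.1
      exact ⟨w⁻¹ * u, i, by rw [map_mul, GeomRep.mulApply]⟩
    rcases G.mem_phiPos_or_neg hγΦ with hpos | hneg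
    · have h2 : 0 < f (G.π w⁻¹ β) := G.pos_on_phiPos hf hpos
      simp only [LinearMap.neg_apply, LinearMap.comp_apply, LinearEquiv.coe_coe]
      linarith
    · exfalso
      apply hβN
      refine ⟨hβpos, G.π w⁻¹ β, ?_, G.pi_pi_inv w β⟩
      rwa [Set.mem_neg]
end
end

section
/- For every w ∈ W, the inversion set N(w) is separable: cone(N(w)) ∩ cone(Φ⁺ \ N(w)) = {0}. -/
open Pointwise

noncomputable section

namespace GeomRep

variable {B : Type*} [Fintype B] {W : Type*} [Group W]
  {M : CoxeterMatrix B} {cs : CoxeterSystem M W}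
  {V : Type*} [AddCommGroup V] [Module ℝ V] (G : GeomRep M cs V)

/-- The positive cone, as nonnegative `B`-indexed combinations of simple roots. -/
def posCone : Set V :=
  {v | ∃ c : B → ℝ, (∀ k, 0 ≤ c k) ∧ ∑ k, c k • G.α k = v}

lemma alpha_mem_posCone (i : B) : G.α i ∈ G.posCone := by
  classical
  refine ⟨fun k => if k = i then 1 else 0, fun k => by dsimp only; split <;> norm_num, ?_⟩
  simp [ite_smul]

lemma smul_sum_mem_posCone {n : ℕ} {c : Fin n → ℝ} {z : Fin n → V}
    (hc : ∀ i, 0 ≤ c i) (hz : ∀ i, z i ∈ G.posCone) :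
    ∑ i, c i • z i ∈ G.posCone := by
  choose e he1 he2 using hz
  refine ⟨fun k => ∑ i, c i * e i k, fun k => Finset.sum_nonneg fun i _ =>
    mul_nonneg (hc i) (he1 i k), ?_⟩
  calc ∑ k, (∑ i, c i * e i k) • G.α k
      = ∑ k, ∑ i, (c i * e i k) • G.α k := by
        simp [Finset.sum_smul]
    _ = ∑ i, ∑ k, (c i * e i k) • G.α k := Finset.sum_comm
    _ = ∑ i, c i • z i := by
        refine Finset.sum_congr rfl fun i _ => ?_
        rw [← he2 i, Finset.smul_sum]
        simp [mul_smul]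

lemma add_smul_mem_posCone {a b : ℝ} {p q : V} (ha : 0 ≤ a) (hb : 0 ≤ b)
    (hp : p ∈ G.posCone) (hq : q ∈ G.posCone) : a • p + b • q ∈ G.posCone := by
  have := G.smul_sum_mem_posCone (c := ![a, b]) (z := ![p, q])
    (fun i => by fin_cases i <;> assumption)
    (fun i => by fin_cases i <;> assumption)
  simpa [Fin.sum_univ_two] using this

lemma coneOf_subset_posCone {X : Set V} (hX : X ⊆ G.posCone) :
    coneOf X ⊆ G.posCone := by
  rintro v ⟨n, c, f, h1, h2, rfl⟩
  exact G.smul_sum_mem_posCone h1 fun i => hX (h2 i)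

lemma range_alpha_subset_posCone : Set.range G.α ⊆ G.posCone := by
  rintro v ⟨i, rfl⟩; exact G.alpha_mem_posCone i

lemma coneOf_range_subset_posCone : coneOf (Set.range G.α) ⊆ G.posCone :=
  G.coneOf_subset_posCone G.range_alpha_subset_posCone

lemma posCone_subset_coneOf : G.posCone ⊆ coneOf (Set.range G.α) := by
  rintro v ⟨c, hc, rfl⟩
  refine ⟨Fintype.card B, c ∘ (Fintype.equivFin B).symm, G.α ∘ (Fintype.equivFin B).symm,
    fun i => hc _, fun i => ⟨_, rfl⟩, ?_⟩
  exact Equiv.sum_comp (Fintype.equivFin B).symm (fun k => c k • G.α k)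

lemma eq_zero_of_mem_posCone_neg_mem {v : V} (h1 : v ∈ G.posCone)
    (h2 : -v ∈ G.posCone) : v = 0 := by
  obtain ⟨c, hc, hcv⟩ := h1
  obtain ⟨d, hd, hdv⟩ := h2
  have hsum : ∑ k, (c k + d k) • G.α k = 0 := by
    simp only [add_smul, Finset.sum_add_distrib, hcv, hdv]
    abel
  have hzero := G.pos_indep (fun k => c k + d k)
    (fun k => add_nonneg (hc k) (hd k)) hsum
  have hc0 : ∀ k, c k = 0 := fun k => by have := hzero k; linarith [hd k, hc k]
  rw [← hcv]
  simp [hc0]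

lemma pi_apply_simple_root (i : B) :
    G.π (cs.simple i) (G.α i) = -G.α i := by
  rw [G.simple_refl, G.norm_one]
  module

lemma pi_mul_apply (u v : W) (x : V) : G.π (u * v) x = G.π u (G.π v x) := by
  rw [map_mul]; rfl

lemma pi_inv_apply_pi (w : W) (x : V) : G.π w⁻¹ (G.π w x) = x := by
  rw [← G.pi_mul_apply, inv_mul_cancel, map_one]; rfl

lemma pi_apply_pi_inv (w : W) (x : V) : G.π w (G.π w⁻¹ x) = x := by
  rw [← G.pi_mul_apply, mul_inv_cancel, map_one]; rfl

lemma neg_mem_Phi {v : V} (hv : v ∈ G.Phi) : -v ∈ G.Phi := by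
  obtain ⟨w, i, rfl⟩ := hv
  exact ⟨w * cs.simple i, i, by
    rw [G.pi_mul_apply, G.pi_apply_simple_root, map_neg]⟩

lemma pi_mem_Phi (u : W) {v : V} (hv : v ∈ G.Phi) : G.π u v ∈ G.Phi := by
  obtain ⟨w, i, rfl⟩ := hv
  exact ⟨u * w, i, by rw [G.pi_mul_apply]⟩

/-- Structure of reduced words in two letters: they are alternating words. -/
lemma reduced_word_pair_alternating :
    ∀ (n : ℕ) (i j : B), i ≠ j → ∀ ω : List B, ω.length = n →
    (∀ k ∈ ω, k = i ∨ k = j) → cs.IsReduced (ω ++ [i]) →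
    ω ++ [i] = CoxeterSystem.alternatingWord j i (ω.length + 1) := by
  intro n
  induction n using Nat.strong_induction_on with
  | _ n IH =>
    intro i j hij ω hlen hmem hred
    rcases List.eq_nil_or_concat ω with rfl | ⟨χ, k, rfl⟩
    · simp [CoxeterSystem.alternatingWord]
    · simp only [List.concat_eq_append] at hlen hmem hred ⊢
      have hk : k = i ∨ k = j := hmem k (by simp)
      have hki : k ≠ i := by
        rintro rfl
        have hprod : cs.wordProd ((χ ++ [k]) ++ [k]) = cs.wordProd χ := by
          rw [List.append_assoc, cs.wordProd_append, cs.wordProd_append,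
            cs.wordProd_singleton, cs.simple_mul_simple_self, mul_one]
        have hlen2 := hred
        unfold CoxeterSystem.IsReduced at hlen2
        rw [hprod] at hlen2
        have := cs.length_wordProd_le χ
        simp at hlen2
        omega
      have hkj : k = j := hk.resolve_left hki
      subst hkj
      have hχlen : χ.length < n := by
        simp only [List.length_append, List.length_singleton] at hlen; omega
      have hχmem : ∀ l ∈ χ, l = k ∨ l = i := by
        intro l hl
        have := hmem l (List.mem_append_left _ hl)
        tauto
      have hpre : cs.IsReduced (χ ++ [k]) := by
        have h := CoxeterSystem.IsReduced.take hred (χ.length + 1)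
        rwa [List.take_left' (by simp)] at h
      have hIH := IH χ.length hχlen k i hki χ rfl hχmem hpre
      rw [show (χ ++ [k]).length + 1 = (χ.length + 1) + 1 by simp]
      rw [CoxeterSystem.alternatingWord_succ, ← hIH, List.concat_eq_append]

/-- Coefficients of an alternating word applied to a simple root, in terms of a
solution of the two-term recurrence. -/
lemma pi_alternatingWord_apply (i j : B) (f : ℕ → ℝ)
    (hf0 : f 0 = -1) (hf1 : f 1 = 0)
    (hrec : ∀ k : ℕ, f (k + 2) = (-2 * G.bil (G.α i) (G.α j)) * f (k + 1) - f k) :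
    ∀ m : ℕ,
      (Even m →
        (G.π (cs.wordProd (CoxeterSystem.alternatingWord i j m)) (G.α i)
          = f (m + 2) • G.α i + f (m + 1) • G.α j) ∧
        (G.π (cs.wordProd (CoxeterSystem.alternatingWord i j m)) (G.α j)
          = (-f (m + 1)) • G.α i + (-f m) • G.α j) ∧
        (G.π (cs.wordProd (CoxeterSystem.alternatingWord j i m)) (G.α j)
          = f (m + 1) • G.α i + f (m + 2) • G.α j) ∧
        (G.π (cs.wordProd (CoxeterSystem.alternatingWord j i m)) (G.α i)
          = (-f m) • G.α i + (-f (m + 1)) • G.α j)) ∧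
      (¬ Even m →
        (G.π (cs.wordProd (CoxeterSystem.alternatingWord i j m)) (G.α i)
          = f (m + 1) • G.α i + f (m + 2) • G.α j) ∧
        (G.π (cs.wordProd (CoxeterSystem.alternatingWord i j m)) (G.α j)
          = (-f m) • G.α i + (-f (m + 1)) • G.α j) ∧
        (G.π (cs.wordProd (CoxeterSystem.alternatingWord j i m)) (G.α j)
          = f (m + 2) • G.α i + f (m + 1) • G.α j) ∧
        (G.π (cs.wordProd (CoxeterSystem.alternatingWord j i m)) (G.α i)
          = (-f (m + 1)) • G.α i + (-f m) • G.α j)) := by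
  have hone : ∀ v : V, G.π 1 v = v := fun v => by rw [map_one]; rfl
  have hf2 : f 2 = 1 := by rw [show (2:ℕ) = 0 + 2 from rfl, hrec 0, hf0, hf1]; ring
  have hsym : G.bil (G.α j) (G.α i) = G.bil (G.α i) (G.α j) :=
    G.bil_symm (G.α j) (G.α i)
  intro m
  induction m with
  | zero =>
    constructor
    · intro _
      refine ⟨?_, ?_, ?_, ?_⟩ <;>
        simp only [CoxeterSystem.alternatingWord, cs.wordProd_nil, hone,
          hf2, hf1, hf0, zero_add] <;> module
    · intro h; exact absurd Even.zero h
  | succ m ih =>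
    obtain ⟨ihE, ihO⟩ := ih
    have hstep : ∀ (k l : B) (v : V),
        G.π (cs.wordProd (CoxeterSystem.alternatingWord k l (m + 1))) v
          = G.π (cs.wordProd (CoxeterSystem.alternatingWord l k m))
              (G.π (cs.simple l) v) := by
      intro k l v
      rw [CoxeterSystem.alternatingWord_succ, cs.wordProd_concat, G.pi_mul_apply]
    have hr1 : f (m + 2) = (-2 * G.bil (G.α i) (G.α j)) * f (m + 1) - f m := hrec m
    have hr1' : f (m + 1 + 1) = (-2 * G.bil (G.α i) (G.α j)) * f (m + 1) - f m :=
      hrec m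
    constructor
    · intro hE
      have hm : ¬ Even m := by
        rw [Nat.even_add_one] at hE; exact hE
      obtain ⟨o1, o2, o3, o4⟩ := ihO hm
      refine ⟨?_, ?_, ?_, ?_⟩
      · rw [hstep i j, G.simple_refl, map_sub, map_smul, o4, o3, hsym,
          hrec (m + 1), hr1']; module
      · rw [hstep i j, G.simple_refl, G.norm_one, map_sub, map_smul, o3,
          hr1']; module
      · rw [hstep j i, G.simple_refl, map_sub, map_smul, o2, o1,
          hrec (m + 1), hr1']; module
      · rw [hstep j i, G.simple_refl, G.norm_one, map_sub, map_smul, o1,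
          hr1']; module
    · intro hO
      have hm : Even m := by
        rw [Nat.even_add_one, not_not] at hO; exact hO
      obtain ⟨p1, p2, p3, p4⟩ := ihE hm
      refine ⟨?_, ?_, ?_, ?_⟩
      · rw [hstep i j, G.simple_refl, map_sub, map_smul, p4, p3, hsym,
          hrec (m + 1), hr1']; module
      · rw [hstep i j, G.simple_refl, G.norm_one, map_sub, map_smul, p3,
          hr1']; module
      · rw [hstep j i, G.simple_refl, map_sub, map_smul, p2, p1,
          hrec (m + 1), hr1']; module
      · rw [hstep j i, G.simple_refl, G.norm_one, map_sub, map_smul, p1,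
          hr1']; module

/-- The dihedral computation: coefficients of `π(alternating word) αᵢ` are nonnegative. -/
lemma dihedral (i j : B) (hij : i ≠ j) (m : ℕ)
    (hm : M.M i j = 0 ∨ m + 1 ≤ M.M i j) :
    ∃ a b : ℝ, 0 ≤ a ∧ 0 ≤ b ∧
      G.π (cs.wordProd (CoxeterSystem.alternatingWord i j m)) (G.α i)
        = a • G.α i + b • G.α j := by
  rcases hm with hm | hm
  · -- infinite case
    have hc : G.bil (G.α i) (G.α j) ≤ -1 := G.angle_infinite i j hij hm
    set d : ℝ := -2 * G.bil (G.α i) (G.α j) with hd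
    have hd2 : 2 ≤ d := by rw [hd]; linarith
    let F : ℕ → ℝ × ℝ :=
      fun k => Nat.rec ((-1 : ℝ), (0 : ℝ)) (fun _ p => (p.2, d * p.2 - p.1)) k
    have hF0 : F 0 = (-1, 0) := rfl
    have hFs : ∀ k, F (k + 1) = ((F k).2, d * (F k).2 - (F k).1) := fun k => rfl
    have hmono : ∀ k, (F k).1 ≤ (F k).2 ∧ 0 ≤ (F k).2 := by
      intro k
      induction k with
      | zero => rw [hF0]; norm_num
      | succ k ih =>
        rw [hFs k]
        constructor
        · simp only
          nlinarith [ih.1, ih.2, hd2]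
        · simp only
          nlinarith [ih.1, ih.2, hd2]
    have hf0 : (fun k => (F k).1) 0 = -1 := rfl
    have hf1 : (fun k => (F k).1) 1 = 0 := rfl
    have hrec : ∀ k : ℕ, (fun k => (F k).1) (k + 2)
        = (-2 * G.bil (G.α i) (G.α j)) * ((fun k => (F k).1) (k + 1))
          - (fun k => (F k).1) k := fun k => rfl
    have happ := G.pi_alternatingWord_apply i j (fun k => (F k).1) hf0 hf1 hrec m
    have hb1 : 0 ≤ (F (m + 1)).1 := by
      rw [hFs m]; exact (hmono m).2
    have hb2 : 0 ≤ (F (m + 2)).1 := by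
      rw [show m + 2 = (m + 1) + 1 from rfl, hFs (m + 1)]
      exact (hmono (m + 1)).2
    rcases Nat.even_or_odd m with he | ho
    · exact ⟨(F (m + 2)).1, (F (m + 1)).1, hb2, hb1, (happ.1 he).1⟩
    · exact ⟨(F (m + 1)).1, (F (m + 2)).1, hb1, hb2,
        (happ.2 (Nat.not_even_iff_odd.mpr ho)).1⟩
  · -- finite case
    have hM0 : M.M i j ≠ 0 := by omega
    have hM1 : M.M i j ≠ 1 := M.off_diagonal i j hij
    have hM2 : 2 ≤ M.M i j := by omega
    set θ : ℝ := Real.pi / (M.M i j : ℝ) with hθ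
    have hMpos : (0 : ℝ) < (M.M i j : ℝ) := by
      exact_mod_cast Nat.pos_of_ne_zero hM0
    have hθpos : 0 < θ := by
      rw [hθ]; positivity
    have hθltpi : θ < Real.pi := by
      rw [hθ]
      rw [div_lt_iff₀ hMpos]
      nlinarith [Real.pi_pos, show (2:ℝ) ≤ (M.M i j : ℝ) by exact_mod_cast hM2]
    have hs : 0 < Real.sin θ := Real.sin_pos_of_pos_of_lt_pi hθpos hθltpi
    have hcos : G.bil (G.α i) (G.α j) = -Real.cos θ := G.angle_finite i j hij hM0
    set f : ℕ → ℝ := fun k => Real.sin (((k : ℝ) - 1) * θ) / Real.sin θ with hf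
    have hf0 : f 0 = -1 := by
      rw [hf]
      simp only [Nat.cast_zero]
      rw [show ((0:ℝ) - 1) * θ = -θ by ring, Real.sin_neg]
      field_simp
    have hf1 : f 1 = 0 := by
      rw [hf]
      simp only [Nat.cast_one]
      rw [show ((1:ℝ) - 1) * θ = 0 by ring, Real.sin_zero, zero_div]
    have hrec : ∀ k : ℕ, f (k + 2)
        = (-2 * G.bil (G.α i) (G.α j)) * f (k + 1) - f k := by
      intro k
      rw [hcos, hf]
      simp only
      push_cast
      rw [show ((k:ℝ) + 2 - 1) * θ = (k:ℝ) * θ + θ by ring,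
        show ((k:ℝ) + 1 - 1) * θ = (k:ℝ) * θ by ring,
        show ((k:ℝ) - 1) * θ = (k:ℝ) * θ - θ by ring,
        Real.sin_add, Real.sin_sub]
      field_simp
      ring
    have happ := G.pi_alternatingWord_apply i j f hf0 hf1 hrec m
    have hcast : ((m : ℝ) + 1) ≤ (M.M i j : ℝ) := by exact_mod_cast hm
    have hdm : θ * (M.M i j : ℝ) = Real.pi := by
      rw [hθ]; field_simp
    have harg : ∀ x : ℝ, 0 ≤ x → x ≤ (M.M i j : ℝ) → 0 ≤ Real.sin (x * θ) := by
      intro x hx hxm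
      apply Real.sin_nonneg_of_nonneg_of_le_pi
      · positivity
      · nlinarith [hθpos, hdm, hx, hxm]
    have h1 : 0 ≤ f (m + 1) := by
      rw [hf]
      simp only
      apply div_nonneg _ hs.le
      have hcst : ((m + 1 : ℕ) : ℝ) - 1 = (m : ℝ) := by push_cast; ring
      rw [hcst]
      exact harg (m : ℝ) (by positivity) (by linarith [hcast])
    have h2 : 0 ≤ f (m + 2) := by
      rw [hf]
      simp only
      apply div_nonneg _ hs.le
      have hcst : ((m + 2 : ℕ) : ℝ) - 1 = (m : ℝ) + 1 := by push_cast; ring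
      rw [hcst]
      exact harg ((m : ℝ) + 1) (by positivity) hcast
    rcases Nat.even_or_odd m with he | ho
    · exact ⟨f (m + 2), f (m + 1), h2, h1, (happ.1 he).1⟩
    · exact ⟨f (m + 1), f (m + 2), h1, h2,
        (happ.2 (Nat.not_even_iff_odd.mpr ho)).1⟩

/-- Key lemma: if `i` is not a right descent of `w`, then `w αᵢ` is a positive root. -/
lemma keyLemma : ∀ (n : ℕ) (w : W) (i : B), cs.length w = n →
    ¬ cs.IsRightDescent w i → G.π w (G.α i) ∈ G.posCone := by
  intro n
  induction n using Nat.strong_induction_on with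
  | _ n IH =>
    intro w i hn hnd
    rcases Nat.eq_zero_or_pos n with rfl | hpos
    · have hw : w = 1 := cs.length_eq_zero_iff.mp hn
      subst hw
      have h1 : G.π 1 (G.α i) = G.α i := by rw [map_one]; rfl
      rw [h1]
      exact G.alpha_mem_posCone i
    · have hw1 : w ≠ 1 := by
        intro h; subst h; rw [cs.length_one] at hn; omega
      obtain ⟨j, hj⟩ := cs.exists_rightDescent_of_ne_one hw1
      have hij : i ≠ j := by rintro rfl; exact hnd hj
      set T : Set W := {v | ∃ ω : List B, (∀ k ∈ ω, k = i ∨ k = j) ∧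
        w = v * cs.wordProd ω ∧ cs.length v + ω.length = cs.length w} with hT
      have hwT : w ∈ T := ⟨[], by simp, by simp, by simp⟩
      have hne : (cs.length '' T).Nonempty := ⟨_, ⟨w, hwT, rfl⟩⟩
      obtain ⟨v, hvT, hvmin⟩ : ∃ v ∈ T, ∀ v' ∈ T, cs.length v ≤ cs.length v' := by
        obtain ⟨v, hvT, hlv⟩ := Nat.sInf_mem hne
        exact ⟨v, hvT, fun v' hv' => hlv ▸ Nat.sInf_le ⟨v', hv', rfl⟩⟩
      obtain ⟨ω, hmem, hprod, hlen⟩ := hvT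
      have hdesc : ∀ k, (k = i ∨ k = j) → ¬ cs.IsRightDescent v k := by
        intro k hk hdes
        have h' : cs.length (v * cs.simple k) + 1 = cs.length v :=
          cs.isRightDescent_iff.mp hdes
        have hmemT : v * cs.simple k ∈ T := by
          refine ⟨k :: ω, ?_, ?_, ?_⟩
          · intro l hl
            rcases List.mem_cons.mp hl with rfl | hl
            · exact hk
            · exact hmem l hl
          · rw [cs.wordProd_cons, mul_assoc, cs.simple_mul_simple_cancel_left]
            exact hprod
          · rw [List.length_cons]
            omega
        have := hvmin _ hmemT
        omega
      have hwj : w * cs.simple j ∈ T := by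
        refine ⟨[j], by simp, ?_, ?_⟩
        · rw [cs.wordProd_singleton, cs.simple_mul_simple_cancel_right]
        · have := cs.isRightDescent_iff.mp hj
          simp only [List.length_singleton]
          omega
      have hvlt : cs.length v < n := by
        have h1 := hvmin _ hwj
        have h2 := cs.isRightDescent_iff.mp hj
        omega
      have hπω_le := cs.length_wordProd_le ω
      have hred : cs.IsReduced (ω ++ [i]) := by
        unfold CoxeterSystem.IsReduced
        rw [cs.wordProd_append, cs.wordProd_singleton]
        have hwsi : cs.length (w * cs.simple i) = cs.length w + 1 :=
          cs.not_isRightDescent_iff.mp hnd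
        have h1 : cs.length (w * cs.simple i)
            ≤ cs.length v + cs.length (cs.wordProd ω * cs.simple i) := by
          rw [hprod, mul_assoc]
          exact cs.length_mul_le _ _
        have h2 : cs.length (cs.wordProd ω * cs.simple i)
            ≤ cs.length (cs.wordProd ω) + 1 := by
          have := cs.length_mul_le (cs.wordProd ω) (cs.simple i)
          rwa [cs.length_simple] at this
        rw [List.length_append, List.length_singleton]
        omega
      have hstruct := reduced_word_pair_alternating (cs := cs)
        ω.length i j hij ω rfl hmem hred
      have hω : ω = CoxeterSystem.alternatingWord i j ω.length := by
        have h2 : ω ++ [i] = CoxeterSystem.alternatingWord i j ω.length ++ [i] := by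
          rw [hstruct, CoxeterSystem.alternatingWord_succ, List.concat_eq_append]
        exact List.append_cancel_right h2
      have hbound : M.M i j = 0 ∨ ω.length + 1 ≤ M.M i j := by
        by_cases h0 : M.M i j = 0
        · exact Or.inl h0
        · right
          by_contra hgt
          push_neg at hgt
          have hnr := cs.not_isReduced_alternatingWord j i (m := ω.length + 1)
            (by rw [M.symmetric j i]; exact h0)
            (by rw [M.symmetric j i]; omega)
          rw [hstruct] at hred
          exact hnr hred
      obtain ⟨a, b, ha, hb, hab⟩ := G.dihedral i j hij ω.length hbound
      rw [← hω] at hab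
      have hsplit : G.π w (G.α i) = a • (G.π v (G.α i)) + b • (G.π v (G.α j)) := by
        rw [hprod, G.pi_mul_apply, hab, map_add, map_smul, map_smul]
      rw [hsplit]
      exact G.add_smul_mem_posCone ha hb
        (IH _ hvlt v i rfl (hdesc i (Or.inl rfl)))
        (IH _ hvlt v j rfl (hdesc j (Or.inr rfl)))

/-- Every root is positive or negative. -/
lemma root_pos_or_neg {v : V} (hv : v ∈ G.Phi) :
    v ∈ G.posCone ∨ -v ∈ G.posCone := by
  obtain ⟨w, i, rfl⟩ := hv
  by_cases h : cs.IsRightDescent w i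
  · right
    have h2 : ¬ cs.IsRightDescent (w * cs.simple i) i :=
      (cs.isRightDescent_iff_not_isRightDescent_mul).mp h
    have := G.keyLemma (cs.length (w * cs.simple i)) (w * cs.simple i) i rfl h2
    have heq : G.π (w * cs.simple i) (G.α i) = -(G.π w (G.α i)) := by
      rw [G.pi_mul_apply, G.pi_apply_simple_root, map_neg]
    rwa [heq] at this
  · exact Or.inl (G.keyLemma (cs.length w) w i rfl h)

end GeomRep

/-- For every `w ∈ W`, the inversion set `N(w)` is separable. -/
theorem stmt10 {B : Type*} [Fintype B] {W : Type*} [Group W]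
    {M : CoxeterMatrix B} {cs : CoxeterSystem M W}
    {V : Type*} [AddCommGroup V] [Module ℝ V] (G : GeomRep M cs V)
    (w : W) : G.IsSeparable (G.N w) := by
  unfold GeomRep.IsSeparable
  apply Set.Subset.antisymm
  · rintro x ⟨⟨n, c, f, hc, hf, hsum⟩, ⟨p, d, g, hd, hg, hsum2⟩⟩
    have hyneg : -(G.π w⁻¹ x) ∈ G.posCone := by
      have h1 : G.π w⁻¹ x = ∑ a, c a • G.π w⁻¹ (f a) := by
        rw [← hsum, map_sum]; simp
      have h2 : -(G.π w⁻¹ x) = ∑ a, c a • (-(G.π w⁻¹ (f a))) := by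
        rw [h1]; simp
      rw [h2]
      refine G.smul_sum_mem_posCone hc fun a => ?_
      obtain ⟨z, hz, hzf⟩ := (hf a).2
      have hfz : G.π w⁻¹ (f a) = z := by rw [← hzf, G.pi_inv_apply_pi]
      rw [hfz]
      have hnz : -z ∈ G.PhiPos := Set.mem_neg.mp hz
      exact G.coneOf_range_subset_posCone hnz.2
    have hypos : G.π w⁻¹ x ∈ G.posCone := by
      have h1 : G.π w⁻¹ x = ∑ b, d b • G.π w⁻¹ (g b) := by
        rw [← hsum2, map_sum]; simp
      rw [h1]
      refine G.smul_sum_mem_posCone hd fun b => ?_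
      have hgb : g b ∈ G.PhiPos \ G.N w := hg b
      have hzPhi : G.π w⁻¹ (g b) ∈ G.Phi := G.pi_mem_Phi w⁻¹ hgb.1.1
      rcases G.root_pos_or_neg hzPhi with h | h
      · exact h
      · exfalso
        have hnPhi : -(G.π w⁻¹ (g b)) ∈ G.Phi := G.neg_mem_Phi hzPhi
        have hnPos : -(G.π w⁻¹ (g b)) ∈ G.PhiPos :=
          ⟨hnPhi, G.posCone_subset_coneOf h⟩
        have : g b ∈ G.N w := by
          refine ⟨hgb.1, ⟨G.π w⁻¹ (g b), Set.mem_neg.mpr hnPos, ?_⟩⟩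
          exact G.pi_apply_pi_inv w (g b)
        exact hgb.2 this
    have hy0 : G.π w⁻¹ x = 0 := G.eq_zero_of_mem_posCone_neg_mem hypos hyneg
    have : x = G.π w (G.π w⁻¹ x) := (G.pi_apply_pi_inv w x).symm
    rw [hy0, map_zero] at this
    simp [this]
  · rintro x hx
    rw [Set.mem_singleton_iff] at hx
    subst hx
    constructor <;>
      exact ⟨0, fun i => 0, fun i => i.elim0, fun i => i.elim0, fun i => i.elim0, by simp⟩
end
end
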